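/- Let K be a field, n and d positive integers, and a_1,...,a_{n+d} pairwise distinct elements of K. Then the determinant of the matrix whose rows are indexed by n-element subsets S of {1,...,n+d}, whose columns are indexed by partitions λ contained in the n×d rectangle (i.e., partitions with at most n parts each at most d), and whose (S,λ) entry is the Schur polynomial s_λ evaluated at (a_s)_{s in S}, equals plus or minus the product over 1 ≤ i < j ≤ n+d of (a_i - a_j) raised to the power binomial(n+d-2, n-1). -/

import Mathlib

open Finset

/-- The Schur polynomial in `n` variables associated to a partition
`lam : Fin n → ℕ`, defined via the bialternant formula. -/
noncomputable def bialternantSchur {K : Type*} [Field K] (n : ℕ) (lam : Fin n → ℕ)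
    (x : Fin n → K) : K :=
  (Matrix.det fun i j : Fin n => x i ^ (lam j + (n - 1 - (j : ℕ)))) /
    Matrix.det fun i j : Fin n => x i ^ (n - 1 - (j : ℕ))

namespace SchurAux

open Matrix

variable {R : Type*} [CommRing R]

theorem det_eq_prod_diag_of_weight {ι : Type*} [Fintype ι] [DecidableEq ι]
    (w : ι → ℤ) (M : Matrix ι ι R) (h : ∀ i j, i ≠ j → M i j ≠ 0 → w i < w j) :
    M.det = ∏ i, M i i := by
  rw [Matrix.det_apply]
  rw [Finset.sum_eq_single (1 : Equiv.Perm ι)]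
  · simp
  · intro σ _ hσ
    have hF : (Finset.univ.filter fun i => σ i ≠ i).Nonempty := by
      by_contra hc
      apply hσ
      ext i : 1
      by_contra hi
      exact hc ⟨i, Finset.mem_filter.2 ⟨Finset.mem_univ i, hi⟩⟩
    obtain ⟨i, hi, hmin⟩ := Finset.exists_min_image _ w hF
    have hσi : σ i ≠ i := (Finset.mem_filter.1 hi).2
    have hσσi : σ (σ i) ≠ σ i := fun hc => hσi (σ.injective hc)
    have hmem : σ i ∈ Finset.univ.filter fun j => σ j ≠ j :=
      Finset.mem_filter.2 ⟨Finset.mem_univ _, hσσi⟩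
    have hz : M (σ i) i = 0 := by
      by_contra hnz
      exact absurd (h (σ i) i hσi hnz) (not_lt.2 (hmin (σ i) hmem))
    have hp : ∏ j, M (σ j) j = 0 := Finset.prod_eq_zero (Finset.mem_univ i) hz
    rw [hp, smul_zero]
  · simp

variable {m : ℕ}

abbrev Sub (m n : ℕ) := {S : Finset (Fin m) // S.card = n}

def renum {m n : ℕ} (S : Sub m n) : Fin n → Fin m :=
  fun i => S.1.orderEmbOfFin S.2 i

theorem renum_strictMono {n : ℕ} (S : Sub m n) :
    StrictMono (renum S) := (S.1.orderEmbOfFin S.2).strictMono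

theorem renum_mem {n : ℕ} (S : Sub m n) (i : Fin n) :
    renum S i ∈ S.1 := S.1.orderEmbOfFin_mem S.2 i

theorem renum_surj {n : ℕ} (S : Sub m n) {x : Fin m}
    (hx : x ∈ S.1) : ∃ i, renum S i = x := by
  have : x ∈ Set.range (S.1.orderEmbOfFin S.2) := by
    rw [Finset.range_orderEmbOfFin]; exact hx
  exact this

/-- The `n`-th compound matrix. -/
def cmp (n : ℕ) (X : Matrix (Fin m) (Fin m) R) : Matrix (Sub m n) (Sub m n) R :=
  fun S T => (X.submatrix (renum S) (renum T)).det

theorem cmp_transpose (n : ℕ) (X : Matrix (Fin m) (Fin m) R) :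
    cmp n Xᵀ = (cmp n X)ᵀ := by
  ext S T
  simp only [cmp, Matrix.transpose_apply]
  rw [← Matrix.transpose_submatrix, Matrix.det_transpose]

theorem prod_renum {n : ℕ} (S : Sub m n) (f : Fin m → R) :
    ∏ i : Fin n, f (renum S i) = ∏ x ∈ S.1, f x := by
  apply Finset.prod_bij (fun i _ => renum S i)
  · exact fun i _ => renum_mem S i
  · exact fun i _ j _ hij => (renum_strictMono S).injective hij
  · intro x hx
    obtain ⟨i, hi⟩ := renum_surj S hx
    exact ⟨i, Finset.mem_univ i, hi⟩
  · exact fun i _ => rfl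

theorem cmp_diagonal (n : ℕ) (D : Fin m → R) :
    cmp n (Matrix.diagonal D) =
      Matrix.diagonal (fun S : Sub m n => ∏ x ∈ S.1, D x) := by
  ext S T
  by_cases hST : S = T
  · subst hST
    rw [cmp, Matrix.submatrix_diagonal _ _ (renum_strictMono S).injective, Matrix.det_diagonal,
      Matrix.diagonal_apply_eq]
    exact prod_renum S D
  · rw [Matrix.diagonal_apply_ne _ hST]
    have hdiff : (S.1 \ T.1).Nonempty := by
      rw [Finset.sdiff_nonempty]
      intro hsub
      exact hST (Subtype.ext (Finset.eq_of_subset_of_card_le hsub (le_of_eq (T.2.trans S.2.symm))))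
    obtain ⟨x, hx⟩ := hdiff
    rw [Finset.mem_sdiff] at hx
    obtain ⟨i, hi⟩ := renum_surj S hx.1
    apply Matrix.det_eq_zero_of_row_eq_zero i
    intro j
    have hne : renum S i ≠ renum T j := by
      intro hc
      apply hx.2
      rw [← hi, hc]
      exact renum_mem T j
    simp only [Matrix.submatrix_apply]
    exact Matrix.diagonal_apply_ne _ hne

section Transvection

variable {n : ℕ} (i j : Fin m)

def swapFun (S : Sub m n) : Fin n → Fin m :=
  fun k => if renum S k = i then j else renum S k

theorem swapFun_mem (S : Sub m n) (k : Fin n) : swapFun i j S k ∈ insert j (S.1.erase i) := by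
  unfold swapFun
  split_ifs with h
  · exact Finset.mem_insert_self _ _
  · exact Finset.mem_insert_of_mem (Finset.mem_erase.2 ⟨h, renum_mem S k⟩)

theorem swapFun_injective (S : Sub m n) (hj : j ∉ S.1) :
    Function.Injective (swapFun i j S) := by
  intro k k' hkk
  unfold swapFun at hkk
  split_ifs at hkk with h1 h2 h2
  · exact (renum_strictMono S).injective (h1.trans h2.symm)
  · exact absurd (hkk ▸ renum_mem S k') hj
  · exact absurd (hkk ▸ renum_mem S k) hj
  · exact (renum_strictMono S).injective hkk

theorem card_opSet {S : Sub m n} (hi : i ∈ S.1) (hj : j ∉ S.1) :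
    (insert j (S.1.erase i)).card = n := by
  have hn : 0 < n := S.2 ▸ Finset.card_pos.2 ⟨i, hi⟩
  rw [Finset.card_insert_of_notMem (fun hc => hj (Finset.mem_of_mem_erase hc)),
    Finset.card_erase_of_mem hi, S.2]
  omega

def opS (S : Sub m n) : Sub m n :=
  if h : i ∈ S.1 ∧ j ∉ S.1 then ⟨insert j (S.1.erase i), card_opSet i j h.1 h.2⟩ else S

noncomputable def swapPerm (S : Sub m n) (hi : i ∈ S.1) (hj : j ∉ S.1) :
    Equiv.Perm (Fin n) :=
  Equiv.ofBijective
    (fun k => ((insert j (S.1.erase i)).orderIsoOfFin (card_opSet i j hi hj)).symm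
      ⟨swapFun i j S k, swapFun_mem i j S k⟩)
    (by
      apply Finite.injective_iff_bijective.1
      intro k k' hkk
      apply swapFun_injective i j S hj
      have := congrArg (((insert j (S.1.erase i)).orderIsoOfFin (card_opSet i j hi hj))) hkk
      simpa using this)

theorem opS_of_mem (S : Sub m n) (hi : i ∈ S.1) (hj : j ∉ S.1) :
    opS i j S = ⟨insert j (S.1.erase i), card_opSet i j hi hj⟩ := dif_pos ⟨hi, hj⟩

theorem renum_opS_swapPerm (S : Sub m n) (hi : i ∈ S.1) (hj : j ∉ S.1) (k : Fin n) :
    renum (opS i j S) (swapPerm i j S hi hj k) = swapFun i j S k := by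
  rw [opS_of_mem i j S hi hj]
  show (insert j (S.1.erase i)).orderEmbOfFin _ _ = _
  rw [← Finset.coe_orderIsoOfFin_apply]
  simp [swapPerm]

noncomputable def sg (S : Sub m n) : R :=
  if h : i ∈ S.1 ∧ j ∉ S.1 then ((Equiv.Perm.sign (swapPerm i j S h.1 h.2) : ℤ) : R) else 1

noncomputable def Emat (c : R) : Matrix (Sub m n) (Sub m n) R :=
  fun S T => if T = S then 1
    else if (i ∈ S.1 ∧ j ∉ S.1) ∧ T = opS i j S then c * sg i j S else 0

theorem S_ne_opS (S : Sub m n) (hi : i ∈ S.1) (hj : j ∉ S.1) : S ≠ opS i j S := by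
  rw [opS_of_mem i j S hi hj]
  intro hc
  apply hj
  rw [Subtype.ext_iff] at hc
  rw [hc]
  exact Finset.mem_insert_self _ _

theorem det_Emat (hij : i ≠ j) (c : R) : (Emat i j c : Matrix (Sub m n) _ _).det = 1 := by
  have key : ∀ S T : Sub m n, S ≠ T → Emat i j c S T ≠ 0 →
      ((if (i : ℕ) < (j : ℕ) then (1 : ℤ) else -1) * ∑ x ∈ S.1, ((x : ℕ) : ℤ)) <
      ((if (i : ℕ) < (j : ℕ) then (1 : ℤ) else -1) * ∑ x ∈ T.1, ((x : ℕ) : ℤ)) := by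
    intro S T hne hnz
    rw [Emat] at hnz
    rw [if_neg (fun hc => hne hc.symm)] at hnz
    have hcond : (i ∈ S.1 ∧ j ∉ S.1) ∧ T = opS i j S := by
      by_contra hc
      rw [if_neg hc] at hnz
      exact hnz rfl
    obtain ⟨⟨hi, hj⟩, hT⟩ := hcond
    have hsum : ∑ x ∈ T.1, ((x : ℕ) : ℤ) =
        ∑ x ∈ S.1, ((x : ℕ) : ℤ) - (i : ℕ) + (j : ℕ) := by
      rw [hT, opS_of_mem i j S hi hj]
      show ∑ x ∈ insert j (S.1.erase i), ((x : ℕ) : ℤ) = _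
      rw [Finset.sum_insert (fun hc => hj (Finset.mem_of_mem_erase hc)),
        Finset.sum_erase_eq_sub hi]
      ring
    have hij' : (i : ℕ) ≠ (j : ℕ) := fun hc => hij (Fin.ext hc)
    rw [hsum]
    by_cases hlt : (i : ℕ) < (j : ℕ)
    · rw [if_pos hlt]
      have : ((i : ℕ) : ℤ) < ((j : ℕ) : ℤ) := by exact_mod_cast hlt
      linarith
    · rw [if_neg hlt]
      have : ((j : ℕ) : ℤ) < ((i : ℕ) : ℤ) := by
        have : (j : ℕ) < (i : ℕ) := by omega
        exact_mod_cast this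
      linarith
  rw [det_eq_prod_diag_of_weight _ _ key]
  apply Finset.prod_eq_one
  intro S _
  simp [Emat]

theorem cmp_transvection_mul (hij : i ≠ j) (c : R) (X : Matrix (Fin m) (Fin m) R) :
    cmp n (Matrix.transvection i j c * X) = Emat i j c * cmp n X := by
  ext S T
  rw [Matrix.mul_apply]
  by_cases hiS : i ∈ S.1
  · obtain ⟨i₀, hi₀⟩ := renum_surj S hiS
    -- decompose the left-hand submatrix via updateRow
    have hdecomp : (Matrix.transvection i j c * X).submatrix (renum S) (renum T) =
        Matrix.updateRow (X.submatrix (renum S) (renum T)) i₀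
          ((X.submatrix (renum S) (renum T)) i₀ + c • fun j' => X j (renum T j')) := by
      ext k j'
      by_cases hk : k = i₀
      · subst hk
        rw [Matrix.updateRow_self]
        simp only [Matrix.submatrix_apply, Pi.add_apply, Pi.smul_apply, smul_eq_mul, hi₀]
        rw [Matrix.transvection_mul_apply_same]
      · rw [Matrix.updateRow_ne hk]
        simp only [Matrix.submatrix_apply]
        rw [Matrix.transvection_mul_apply_of_ne]
        intro hc
        exact hk ((renum_strictMono S).injective (by rw [hc, hi₀]))
    by_cases hjS : j ∈ S.1
    · -- i, j ∈ S : LHS equals cmp X S T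
      obtain ⟨j₀, hj₀⟩ := renum_surj S hjS
      have hj₀i₀ : j₀ ≠ i₀ := by
        intro hc
        apply hij
        rw [← hi₀, ← hj₀, hc]
      have hLHS : cmp n (Matrix.transvection i j c * X) S T = cmp n X S T := by
        show (Matrix.submatrix _ _ _).det = _
        rw [hdecomp, Matrix.det_updateRow_add, Matrix.det_updateRow_smul,
          Matrix.updateRow_eq_self]
        have hrow : (fun j' => X j (renum T j')) = (X.submatrix (renum S) (renum T)) j₀ := by
          funext j'
          simp [Matrix.submatrix_apply, hj₀]
        rw [hrow, Matrix.det_updateRow_eq_zero hj₀i₀, mul_zero, add_zero]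
        rfl
      rw [hLHS]
      have hE : ∀ U : Sub m n, Emat i j c S U * cmp n X U T =
          if U = S then cmp n X S T else 0 := by
        intro U
        by_cases hU : U = S
        · subst hU; simp [Emat]
        · simp [Emat, hU, hjS]
      rw [Finset.sum_congr rfl (fun U _ => hE U), Finset.sum_ite_eq' _ S]
      simp
    · -- i ∈ S, j ∉ S : the main case
      have hS' := opS_of_mem i j S hiS hjS
      have hSne : S ≠ opS i j S := S_ne_opS i j S hiS hjS
      -- LHS
      have hB : Matrix.updateRow (X.submatrix (renum S) (renum T)) i₀
            (fun j' => X j (renum T j')) =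
          (X.submatrix (renum (opS i j S)) (renum T)).submatrix
            (swapPerm i j S hiS hjS) id := by
        ext k j'
        simp only [Matrix.submatrix_apply, id]
        rw [renum_opS_swapPerm i j S hiS hjS k]
        by_cases hk : k = i₀
        · rw [hk, Matrix.updateRow_self]
          have hsw : swapFun i j S i₀ = j := by simp [swapFun, hi₀]
          rw [hsw]
        · rw [Matrix.updateRow_ne hk]
          have hsw : swapFun i j S k = renum S k := by
            rw [swapFun]
            rw [if_neg]
            intro hc
            exact hk ((renum_strictMono S).injective (by rw [hc, hi₀]))
          rw [hsw]
          simp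
      have hLHS : cmp n (Matrix.transvection i j c * X) S T =
          cmp n X S T + c * (sg i j S * cmp n X (opS i j S) T) := by
        show (Matrix.submatrix _ _ _).det = _
        rw [hdecomp, Matrix.det_updateRow_add, Matrix.det_updateRow_smul,
          Matrix.updateRow_eq_self, hB, Matrix.det_permute, sg, dif_pos ⟨hiS, hjS⟩]
        rfl
      rw [hLHS]
      have hE : ∀ U : Sub m n, Emat i j c S U * cmp n X U T =
          (if U = S then cmp n X S T else 0) +
          (if U = opS i j S then c * sg i j S * cmp n X (opS i j S) T else 0) := by
        intro U
        by_cases hU : U = S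
        · subst hU
          simp [Emat, hSne]
        · by_cases hU2 : U = opS i j S
          · simp [Emat, hU, hU2, hiS, hjS, mul_assoc, Ne.symm hSne]
          · simp [Emat, hU, hU2]
      rw [Finset.sum_congr rfl (fun U _ => hE U), Finset.sum_add_distrib,
        Finset.sum_ite_eq' _ S, Finset.sum_ite_eq' _ (opS i j S)]
      simp only [Finset.mem_univ, if_true]
      ring
  · -- i ∉ S
    have hLHS : cmp n (Matrix.transvection i j c * X) S T = cmp n X S T := by
      show (Matrix.submatrix _ _ _).det = _
      congr 1
      ext k j'
      simp only [Matrix.submatrix_apply]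
      apply Matrix.transvection_mul_apply_of_ne
      intro hc
      exact hiS (hc ▸ renum_mem S k)
    rw [hLHS]
    have hE : ∀ U : Sub m n, Emat i j c S U * cmp n X U T =
        if U = S then cmp n X S T else 0 := by
      intro U
      by_cases hU : U = S
      · subst hU; simp [Emat]
      · simp [Emat, hU, hiS]
    rw [Finset.sum_congr rfl (fun U _ => hE U), Finset.sum_ite_eq' _ S]
    simp

theorem det_cmp_transvection_mul (hij : i ≠ j) (c : R) (X : Matrix (Fin m) (Fin m) R) :
    (cmp n (Matrix.transvection i j c * X)).det = (cmp n X).det := by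
  rw [cmp_transvection_mul i j hij c X, Matrix.det_mul, det_Emat i j hij c, one_mul]

theorem transvection_transpose (c : R) :
    (Matrix.transvection i j c)ᵀ = Matrix.transvection j i c := by
  ext a b
  simp only [Matrix.transpose_apply, Matrix.transvection, Matrix.add_apply,
    Matrix.single, Matrix.one_apply, Matrix.of_apply]
  by_cases h1 : a = b
  · subst h1; simp [and_comm]
  · simp [h1, Ne.symm h1, and_comm]

theorem det_cmp_mul_transvection (hij : i ≠ j) (c : R) (X : Matrix (Fin m) (Fin m) R) :
    (cmp n (X * Matrix.transvection i j c)).det = (cmp n X).det := by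
  have h1 : X * Matrix.transvection i j c = ((Matrix.transvection i j c)ᵀ * Xᵀ)ᵀ := by
    rw [Matrix.transpose_mul, Matrix.transpose_transpose, Matrix.transpose_transpose]
  rw [h1, cmp_transpose, Matrix.det_transpose, transvection_transpose,
    det_cmp_transvection_mul j i hij.symm c Xᵀ, cmp_transpose, Matrix.det_transpose]

end Transvection

section Field

variable {𝕜 : Type*} [Field 𝕜] {n : ℕ}

theorem det_cmp_list_mul (L : List (Matrix.TransvectionStruct (Fin m) 𝕜))
    (X : Matrix (Fin m) (Fin m) 𝕜) :
    (cmp n ((L.map Matrix.TransvectionStruct.toMatrix).prod * X)).det = (cmp n X).det := by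
  induction L generalizing X with
  | nil => simp
  | cons t L IH =>
    rw [List.map_cons, List.prod_cons, Matrix.mul_assoc]
    rw [show Matrix.TransvectionStruct.toMatrix t = Matrix.transvection t.i t.j t.c from rfl]
    rw [det_cmp_transvection_mul t.i t.j t.hij t.c]
    exact IH _

theorem det_cmp_mul_list (L : List (Matrix.TransvectionStruct (Fin m) 𝕜))
    (X : Matrix (Fin m) (Fin m) 𝕜) :
    (cmp n (X * (L.map Matrix.TransvectionStruct.toMatrix).prod)).det = (cmp n X).det := by
  induction L generalizing X with
  | nil => simp
  | cons t L IH =>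
    rw [List.map_cons, List.prod_cons, ← Matrix.mul_assoc]
    rw [IH (X * Matrix.TransvectionStruct.toMatrix t)]
    rw [show Matrix.TransvectionStruct.toMatrix t = Matrix.transvection t.i t.j t.c from rfl]
    exact det_cmp_mul_transvection t.i t.j t.hij t.c X

/-- Number of `n`-subsets of `Fin m` containing a fixed subset `t`. -/
theorem card_filter_superset (t : Finset (Fin m)) (ht : t.card ≤ n) :
    (Finset.univ.filter fun S : Sub m n => t ⊆ S.1).card
      = (m - t.card).choose (n - t.card) := by
  have hdisj : ∀ T ∈ Finset.powersetCard (n - t.card) ((Finset.univ : Finset (Fin m)) \ t),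
      Disjoint T t := by
    intro T hT
    rw [Finset.mem_powersetCard] at hT
    apply Finset.disjoint_left.2
    intro x hx
    have hx2 := hT.1 hx
    rw [Finset.mem_sdiff] at hx2
    exact hx2.2
  have key : (Finset.univ.filter fun S : Sub m n => t ⊆ S.1).card
      = (Finset.powersetCard (n - t.card) ((Finset.univ : Finset (Fin m)) \ t)).card := by
    refine Finset.card_bij' (fun (S : Sub m n) _ => S.1 \ t)
      (fun T hT => (⟨T ∪ t, ?_⟩ : Sub m n)) ?_ ?_ ?_ ?_
    · rw [Finset.mem_powersetCard] at hT
      rw [Finset.card_union_of_disjoint (hdisj T (by rw [Finset.mem_powersetCard]; exact hT)),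
        hT.2]
      omega
    · intro S hS
      rw [Finset.mem_filter] at hS
      rw [Finset.mem_powersetCard]
      constructor
      · exact Finset.sdiff_subset_sdiff (Finset.subset_univ _) le_rfl
      · rw [Finset.card_sdiff_of_subset hS.2, S.2]
    · intro T hT
      rw [Finset.mem_filter]
      exact ⟨Finset.mem_univ _, Finset.subset_union_right⟩
    · intro S hS
      rw [Finset.mem_filter] at hS
      exact Subtype.ext (Finset.sdiff_union_of_subset hS.2)
    · intro T hT
      show (T ∪ t) \ t = T
      rw [Finset.union_sdiff_distrib, Finset.sdiff_self, Finset.union_empty,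
        Finset.sdiff_eq_self_iff_disjoint.2 (hdisj T hT)]
  rw [key, Finset.card_powersetCard, Finset.card_sdiff_of_subset (Finset.subset_univ t),
    Finset.card_univ, Fintype.card_fin]

theorem card_filter_mem (x : Fin m) (hn : 0 < n) :
    (Finset.univ.filter fun S : Sub m n => x ∈ S.1).card = (m - 1).choose (n - 1) := by
  have h := card_filter_superset (n := n) {x} (by rw [Finset.card_singleton]; exact hn)
  simp only [Finset.card_singleton] at h
  rw [← h]
  congr 1
  apply Finset.filter_congr
  intro S _
  simp [Finset.singleton_subset_iff]

theorem card_filter_pair (hn : 0 < n) {x y : Fin m} (hxy : x ≠ y) :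
    (m - 1).choose (n - 1)
      = (Finset.univ.filter fun S : Sub m n => x ∈ S.1 ∧ y ∈ S.1).card
        + (m - 2).choose (n - 1) := by
  have hm : 2 ≤ m := by
    have h2 : (1 : ℕ) < Fintype.card (Fin m) := Fintype.one_lt_card_iff_nontrivial.2 ⟨⟨x, y, hxy⟩⟩
    simp at h2; omega
  by_cases hn1 : n = 1
  · subst hn1
    have hempty : (Finset.univ.filter fun S : Sub m 1 => x ∈ S.1 ∧ y ∈ S.1) = ∅ := by
      rw [Finset.eq_empty_iff_forall_notMem]
      intro S hS
      rw [Finset.mem_filter] at hS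
      obtain ⟨z, hz⟩ := Finset.card_eq_one.1 S.2
      rw [hz, Finset.mem_singleton, Finset.mem_singleton] at hS
      exact hxy (hS.2.1.trans hS.2.2.symm)
    rw [hempty]
    simp
  · have hn2 : 2 ≤ n := by omega
    have hpair : (Finset.univ.filter fun S : Sub m n => x ∈ S.1 ∧ y ∈ S.1)
        = (Finset.univ.filter fun S : Sub m n => ({x, y} : Finset (Fin m)) ⊆ S.1) := by
      apply Finset.filter_congr
      intro S _
      simp [Finset.insert_subset_iff, Finset.singleton_subset_iff]
    rw [hpair, card_filter_superset {x, y} (by rw [Finset.card_pair hxy]; omega),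
      Finset.card_pair hxy]
    have h1 : m - 1 = (m - 2) + 1 := by omega
    have h2 : n - 1 = (n - 2) + 1 := by omega
    rw [h1, h2, Nat.choose_succ_succ]

/-- Sylvester–Franke: determinant of the compound matrix. -/
theorem det_cmp_eq_pow (hn : 0 < n) (X : Matrix (Fin m) (Fin m) 𝕜) :
    (cmp n X).det = X.det ^ ((m - 1).choose (n - 1)) := by
  obtain ⟨L, L', D, hX⟩ := Matrix.Pivot.exists_list_transvec_mul_diagonal_mul_list_transvec X
  have hassoc : (L.map Matrix.TransvectionStruct.toMatrix).prod * Matrix.diagonal D *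
        (L'.map Matrix.TransvectionStruct.toMatrix).prod
      = (L.map Matrix.TransvectionStruct.toMatrix).prod * (Matrix.diagonal D *
        (L'.map Matrix.TransvectionStruct.toMatrix).prod) := by
    rw [Matrix.mul_assoc]
  have hdetX : X.det = ∏ x, D x := by
    rw [hX, Matrix.det_mul, Matrix.det_mul, Matrix.TransvectionStruct.det_toMatrix_prod,
      Matrix.TransvectionStruct.det_toMatrix_prod, Matrix.det_diagonal]
    ring
  rw [hdetX, hX, hassoc, det_cmp_list_mul, det_cmp_mul_list, cmp_diagonal, Matrix.det_diagonal]
  calc ∏ S : Sub m n, ∏ x ∈ S.1, D x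
      = ∏ S : Sub m n, ∏ x : Fin m, (if x ∈ S.1 then D x else 1) := by
        apply Finset.prod_congr rfl
        intro S _
        rw [Finset.prod_ite_mem, Finset.univ_inter]
    _ = ∏ x : Fin m, ∏ S : Sub m n, (if x ∈ S.1 then D x else 1) := Finset.prod_comm
    _ = ∏ x : Fin m, D x ^ ((m - 1).choose (n - 1)) := by
        apply Finset.prod_congr rfl
        intro x _
        rw [← Finset.prod_filter, Finset.prod_const, card_filter_mem x hn]
    _ = (∏ x, D x) ^ ((m - 1).choose (n - 1)) := by rw [Finset.prod_pow]

end Field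

section Pairs

variable {β : Type*} [CommMonoid β] {k : ℕ}

theorem prod_Ioi_eq_prod_pairs (f : Fin k → Fin k → β) :
    (∏ i, ∏ j ∈ Finset.Ioi i, f i j)
      = ∏ p ∈ Finset.univ.filter (fun p : Fin k × Fin k => p.1 < p.2), f p.1 p.2 := by
  rw [Finset.prod_sigma' Finset.univ (fun i => Finset.Ioi i) (fun i j => f i j)]
  refine Finset.prod_bij' (fun x _ => (x.1, x.2)) (fun p _ => ⟨p.1, p.2⟩) ?_ ?_ ?_ ?_ ?_
  · intro x hx
    rw [Finset.mem_sigma] at hx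
    rw [Finset.mem_filter]
    exact ⟨Finset.mem_univ _, Finset.mem_Ioi.1 hx.2⟩
  · intro p hp
    rw [Finset.mem_filter] at hp
    rw [Finset.mem_sigma]
    exact ⟨Finset.mem_univ _, Finset.mem_Ioi.2 hp.2⟩
  · intro x _; rfl
  · intro p _; rfl
  · intro x _; rfl

theorem prod_pairs_subset {n : ℕ} (S : Sub k n) (f : Fin k → Fin k → β) :
    (∏ p ∈ Finset.univ.filter (fun p : Fin n × Fin n => p.1 < p.2),
        f (renum S p.1) (renum S p.2))
      = ∏ q ∈ Finset.univ.filter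
          (fun q : Fin k × Fin k => q.1 < q.2 ∧ q.1 ∈ S.1 ∧ q.2 ∈ S.1), f q.1 q.2 := by
  refine Finset.prod_bij (fun p _ => (renum S p.1, renum S p.2)) ?_ ?_ ?_ ?_
  · intro p hp
    rw [Finset.mem_filter] at hp ⊢
    exact ⟨Finset.mem_univ _, renum_strictMono S hp.2, renum_mem S p.1, renum_mem S p.2⟩
  · intro p1 h1 p2 h2 heq
    rw [Prod.mk.injEq] at heq
    have e1 := (renum_strictMono S).injective heq.1
    have e2 := (renum_strictMono S).injective heq.2
    exact Prod.ext e1 e2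
  · intro q hq
    rw [Finset.mem_filter] at hq
    obtain ⟨i1, hi1⟩ := renum_surj S hq.2.2.1
    obtain ⟨i2, hi2⟩ := renum_surj S hq.2.2.2
    have hlt : i1 < i2 := by
      have := hq.2.1
      rw [← hi1, ← hi2] at this
      exact (renum_strictMono S).lt_iff_lt.1 this
    refine ⟨(i1, i2), Finset.mem_filter.2 ⟨Finset.mem_univ _, hlt⟩, ?_⟩
    rw [Prod.mk.injEq]
    exact ⟨hi1, hi2⟩
  · intro p _; rfl

end Pairs

section Nu

def nuF (n d : ℕ) (lam : Fin n → ℕ) : Fin n → Fin (n + d) :=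
  fun j => ⟨min (lam j.rev) d + j, by
    have h1 := j.isLt
    have h2 : min (lam j.rev) d ≤ d := min_le_right _ _
    omega⟩

theorem nuF_strictMono {n d : ℕ} {lam : Fin n → ℕ} (hlam : Antitone lam) :
    StrictMono (nuF n d lam) := by
  intro j j' hjj
  rw [Fin.lt_def]
  show min (lam j.rev) d + (j : ℕ) < min (lam j'.rev) d + (j' : ℕ)
  have h1 : lam j.rev ≤ lam j'.rev := hlam (le_of_lt (Fin.rev_lt_rev.mpr hjj))
  have h2 : min (lam j.rev) d ≤ min (lam j'.rev) d := min_le_min h1 le_rfl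
  have hv : (j : ℕ) < (j' : ℕ) := hjj
  omega

theorem nuF_rev_val {n d : ℕ} {lam : Fin n → ℕ} (hb : ∀ i, lam i ≤ d) (j : Fin n) :
    ((nuF n d lam j.rev : Fin (n + d)) : ℕ) = lam j + (n - 1 - (j : ℕ)) := by
  show min (lam j.rev.rev) d + ((j.rev : Fin n) : ℕ) = _
  rw [Fin.rev_rev, min_eq_left (hb j), Fin.val_rev]
  omega

theorem nuF_inj {n d : ℕ} {lam1 lam2 : Fin n → ℕ} (h1 : ∀ i, lam1 i ≤ d)
    (h2 : ∀ i, lam2 i ≤ d) (h : nuF n d lam1 = nuF n d lam2) : lam1 = lam2 := by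
  funext i
  have hv := congrArg Fin.val (congrFun h i.rev)
  have hv' : min (lam1 i.rev.rev) d + ((i.rev : Fin n) : ℕ)
      = min (lam2 i.rev.rev) d + ((i.rev : Fin n) : ℕ) := hv
  rw [Fin.rev_rev, min_eq_left (h1 i), min_eq_left (h2 i)] at hv'
  omega

end Nu

end SchurAux

open SchurAux

/-- Equation (2.3) of the paper: the determinant of the matrix of Schur polynomials
`s_λ(a_S)`, with rows indexed by `n`-element subsets `S` of `{1,…,n+d}` and columns
indexed by partitions `λ` in the `n × d` rectangle, equals
`± ∏_{i<j} (a_i - a_j)^{C(n+d-2, n-1)}`. -/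
theorem schur_values_determinant {K : Type*} [Field K] (n d : ℕ)
    (hn : 0 < n) (hd : 0 < d)
    (a : Fin (n + d) → K) (ha : Function.Injective a)
    (e : {S : Finset (Fin (n + d)) // S.card = n} ≃
        {lam : Fin n → ℕ // Antitone lam ∧ ∀ i, lam i ≤ d}) :
    ∃ ε : K, (ε = 1 ∨ ε = -1) ∧
      Matrix.det (fun S S' : {S : Finset (Fin (n + d)) // S.card = n} =>
          bialternantSchur n (e S').1 fun j : Fin n => a (S.1.orderIsoOfFin S.2 j : Fin (n + d)))
        = ε * ∏ p ∈ Finset.univ.filter (fun p : Fin (n + d) × Fin (n + d) => p.1 < p.2),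
            (a p.1 - a p.2) ^ Nat.choose (n + d - 2) (n - 1) := by
  classical
  set A : Matrix (Fin (n + d)) (Fin (n + d)) K := Matrix.vandermonde a with hA
  -- the column permutation induced by `e` and the partition-to-subset bijection
  have hstrict : ∀ S' : Sub (n + d) n, StrictMono (nuF n d (e S').1) :=
    fun S' => nuF_strictMono (e S').2.1
  set τ : Sub (n + d) n → Sub (n + d) n := fun S' =>
    ⟨Finset.image (nuF n d (e S').1) Finset.univ, by
      rw [Finset.card_image_of_injective _ (hstrict S').injective, Finset.card_univ,
        Fintype.card_fin]⟩ with hτ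
  have hrenum_tau : ∀ S' : Sub (n + d) n, ∀ j : Fin n,
      renum (τ S') j = nuF n d (e S').1 j := by
    intro S' j
    have h := Finset.orderEmbOfFin_unique (τ S').2 (f := nuF n d (e S').1)
      (fun x => Finset.mem_image_of_mem _ (Finset.mem_univ x)) (hstrict S')
    exact (congrFun h j).symm
  have htau_inj : Function.Injective τ := by
    intro S1 S2 h
    have hnu : nuF n d (e S1).1 = nuF n d (e S2).1 := by
      funext j
      rw [← hrenum_tau S1 j, ← hrenum_tau S2 j, h]
    exact e.injective (Subtype.ext (nuF_inj (e S1).2.2 (e S2).2.2 hnu))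
  set σt : Equiv.Perm (Sub (n + d) n) :=
    Equiv.ofBijective τ (Finite.injective_iff_bijective.1 htau_inj) with hσt
  -- sign of the column reversal
  set sgn : K := ((Equiv.Perm.sign (Fin.revPerm : Equiv.Perm (Fin n)) : ℤ) : K) with hsgndef
  have hsgn : sgn = 1 ∨ sgn = -1 := by
    rcases Int.units_eq_one_or (Equiv.Perm.sign (Fin.revPerm : Equiv.Perm (Fin n))) with h | h <;>
      rw [hsgndef, h] <;> simp
  have hsgn0 : sgn ≠ 0 := by rcases hsgn with h | h <;> rw [h] <;> simp
  -- entrywise description of the matrix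
  have hentry : ∀ S S' : Sub (n + d) n,
      bialternantSchur n (e S').1 (fun j : Fin n => a (S.1.orderIsoOfFin S.2 j : Fin (n + d)))
        = (Matrix.det (Matrix.vandermonde (fun i => a (renum S i))))⁻¹
          * cmp n A S (τ S') := by
    intro S S'
    have hxx : (fun j : Fin n => a (S.1.orderIsoOfFin S.2 j : Fin (n + d)))
        = fun i => a (renum S i) := by
      funext j
      rw [renum, Finset.coe_orderIsoOfFin_apply]
    rw [hxx, bialternantSchur]
    have hnum : (Matrix.det fun i j : Fin n =>
          (a (renum S i)) ^ ((e S').1 j + (n - 1 - (j : ℕ))))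
        = sgn * cmp n A S (τ S') := by
      have hmat : (fun i j : Fin n => (a (renum S i)) ^ ((e S').1 j + (n - 1 - (j : ℕ))))
          = (A.submatrix (renum S) (renum (τ S'))).submatrix id ⇑(Fin.revPerm) := by
        funext i jj
        simp only [Matrix.submatrix_apply, id_eq, Fin.revPerm_apply]
        rw [hrenum_tau S', hA, Matrix.vandermonde_apply, nuF_rev_val (e S').2.2 jj]
      rw [hmat, Matrix.det_permute']
      rfl
    have hden : (Matrix.det fun i j : Fin n => (a (renum S i)) ^ (n - 1 - (j : ℕ)))
        = sgn * (Matrix.vandermonde (fun i => a (renum S i))).det := by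
      have hmat : (fun i j : Fin n => (a (renum S i)) ^ (n - 1 - (j : ℕ)))
          = (Matrix.vandermonde (fun i => a (renum S i))).submatrix id ⇑(Fin.revPerm) := by
        funext i jj
        simp only [Matrix.submatrix_apply, id_eq, Fin.revPerm_apply,
          Matrix.vandermonde_apply, Fin.val_rev]
        congr 1
        omega
      rw [hmat, Matrix.det_permute']
    rw [hnum, hden, mul_div_mul_left _ _ hsgn0, div_eq_mul_inv, mul_comm]
  -- determinant factorization
  set vfun : Sub (n + d) n → K :=
    fun S => (Matrix.det (Matrix.vandermonde (fun i => a (renum S i))))⁻¹ with hvfun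
  set B : Matrix (Sub (n + d) n) (Sub (n + d) n) K := (cmp n A).submatrix id ⇑σt with hB
  have hMeq : (fun S S' : Sub (n + d) n =>
        bialternantSchur n (e S').1 fun j : Fin n => a (S.1.orderIsoOfFin S.2 j : Fin (n + d)))
      = Matrix.of (fun S S' => vfun S * B S S') := by
    funext S S'
    exact hentry S S'
  rw [hMeq, Matrix.det_mul_column vfun B]
  have hBdet : B.det = ((Equiv.Perm.sign σt : ℤ) : K) * A.det ^ ((n + d - 1).choose (n - 1)) := by
    rw [hB, Matrix.det_permute' σt (cmp n A), det_cmp_eq_pow hn A]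
  rw [hBdet]
  -- products over pairs
  set pairs : Finset (Fin (n + d) × Fin (n + d)) :=
    Finset.univ.filter (fun q : Fin (n + d) × Fin (n + d) => q.1 < q.2) with hpairs
  set g : Fin (n + d) × Fin (n + d) → K := fun q => a q.2 - a q.1 with hg
  have hg0 : ∀ q ∈ pairs, g q ≠ 0 := by
    intro q hq
    rw [hpairs, Finset.mem_filter] at hq
    exact sub_ne_zero_of_ne (fun hc => (ne_of_lt hq.2).symm (ha hc))
  have hAdet : A.det = ∏ q ∈ pairs, g q := by
    rw [hA, Matrix.det_vandermonde, prod_Ioi_eq_prod_pairs]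
  set cnt : Fin (n + d) × Fin (n + d) → ℕ := fun q =>
    (Finset.univ.filter fun S : Sub (n + d) n => q.1 ∈ S.1 ∧ q.2 ∈ S.1).card with hcnt
  have hW : ∏ S : Sub (n + d) n, Matrix.det (Matrix.vandermonde (fun i => a (renum S i)))
      = ∏ q ∈ pairs, g q ^ cnt q := by
    have hWS : ∀ S : Sub (n + d) n,
        Matrix.det (Matrix.vandermonde (fun i => a (renum S i)))
        = ∏ q ∈ pairs, (if q.1 ∈ S.1 ∧ q.2 ∈ S.1 then g q else 1) := by
      intro S
      rw [Matrix.det_vandermonde, prod_Ioi_eq_prod_pairs, prod_pairs_subset S (fun u v => a v - a u)]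
      rw [← Finset.filter_filter, ← Finset.prod_filter]
    rw [Finset.prod_congr rfl (fun S _ => hWS S), Finset.prod_comm]
    apply Finset.prod_congr rfl
    intro q _
    rw [← Finset.prod_filter, Finset.prod_const]
  have hE1 : ∀ q ∈ pairs, (n + d - 1).choose (n - 1) = cnt q + (n + d - 2).choose (n - 1) := by
    intro q hq
    rw [hpairs, Finset.mem_filter] at hq
    exact card_filter_pair hn (ne_of_lt hq.2)
  -- put everything together
  set En := (n + d - 2).choose (n - 1) with hEn
  have hprodv : ∏ S : Sub (n + d) n, vfun S = (∏ q ∈ pairs, g q ^ cnt q)⁻¹ := by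
    simp only [hvfun]
    rw [Finset.prod_inv_distrib, hW]
  have hcntprod0 : (∏ q ∈ pairs, g q ^ cnt q) ≠ 0 :=
    Finset.prod_ne_zero_iff.2 (fun q hq => pow_ne_zero _ (hg0 q hq))
  have hpow : (∏ q ∈ pairs, g q) ^ ((n + d - 1).choose (n - 1))
      = (∏ q ∈ pairs, g q ^ cnt q) * ∏ q ∈ pairs, g q ^ En := by
    rw [← Finset.prod_pow, ← Finset.prod_mul_distrib]
    apply Finset.prod_congr rfl
    intro q hq
    rw [← pow_add, ← hE1 q hq]
  have hmain : (∏ S : Sub (n + d) n, vfun S)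
        * (((Equiv.Perm.sign σt : ℤ) : K) * A.det ^ ((n + d - 1).choose (n - 1)))
      = ((Equiv.Perm.sign σt : ℤ) : K) * ∏ q ∈ pairs, g q ^ En := by
    have hre : ((Equiv.Perm.sign σt : ℤ) : K) *
          ((∏ q ∈ pairs, g q ^ cnt q) * ∏ q ∈ pairs, g q ^ En)
        = (∏ q ∈ pairs, g q ^ cnt q) *
          (((Equiv.Perm.sign σt : ℤ) : K) * ∏ q ∈ pairs, g q ^ En) := by ring
    rw [hprodv, hAdet, hpow, hre, inv_mul_cancel_left₀ hcntprod0]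
  refine ⟨((Equiv.Perm.sign σt : ℤ) : K) * (-1 : K) ^ (En * pairs.card), ?_, ?_⟩
  · rcases Int.units_eq_one_or (Equiv.Perm.sign σt) with h | h <;>
      rcases neg_one_pow_eq_or K (En * pairs.card) with h2 | h2 <;>
      rw [h, h2] <;> norm_num
  · rw [hmain]
    have htgt : ∏ p ∈ pairs, (a p.1 - a p.2) ^ En
        = (-1 : K) ^ (En * pairs.card) * ∏ q ∈ pairs, g q ^ En := by
      have hterm : ∀ p ∈ pairs, (a p.1 - a p.2) ^ En = (-1 : K) ^ En * g p ^ En := by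
        intro p _
        rw [hg]
        show (a p.1 - a p.2) ^ En = _
        rw [show a p.1 - a p.2 = -(a p.2 - a p.1) from by ring, neg_pow]
      rw [Finset.prod_congr rfl hterm, Finset.prod_mul_distrib, Finset.prod_const, ← pow_mul]
    rw [htgt]
    have hsq : (-1 : K) ^ (En * pairs.card) * (-1 : K) ^ (En * pairs.card) = 1 := by
      rw [← pow_add]
      exact Even.neg_one_pow ⟨En * pairs.card, rfl⟩
    calc ((Equiv.Perm.sign σt : ℤ) : K) * ∏ q ∈ pairs, g q ^ En
        = (((Equiv.Perm.sign σt : ℤ) : K) * ∏ q ∈ pairs, g q ^ En)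
            * ((-1 : K) ^ (En * pairs.card) * (-1 : K) ^ (En * pairs.card)) := by
          rw [hsq, mul_one]
      _ = ((Equiv.Perm.sign σt : ℤ) : K) * (-1 : K) ^ (En * pairs.card)
            * ((-1 : K) ^ (En * pairs.card) * ∏ q ∈ pairs, g q ^ En) := by ring
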